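/- For a Pareto random variable X with P(X > x) = min(1, x^{-a}), a > 1, the mean is m = a/(a−1), and for N such that a > 2N/(2N−1), the ideal-estimator variance 2∫_0^∞∫_0^x p_x p_{x'}^{1−1/N} dx' dx − m^2 equals a/(N(a−1)^2(2(a−1) − a/N)) = m(m−1)^2/(2N − m). -/

import Mathlib

open MeasureTheory Set
open Real

/-- For a Pareto random variable `X` with `P(X > x) = min(1, x^{-a})`, `a > 1`, the mean
is `m = a/(a−1)`, and for `N` with `a > 2N/(2N−1)` the ideal-estimator variance
`2∫_0^∞∫_0^x p_x p_{x'}^{1−1/N} dx' dx − m²` equals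
`a/(N(a−1)²(2(a−1) − a/N)) = m(m−1)²/(2N − m)`. -/
lemma min_one_of_le_one {c y : ℝ} (hc : 0 < c) (hy0 : 0 < y) (hy1 : y ≤ 1) :
    min 1 (y ^ (-c)) = 1 :=
  min_eq_left (Real.one_le_rpow_of_pos_of_le_one_of_nonpos hy0 hy1 (by linarith))

lemma min_one_of_one_le {c y : ℝ} (hc : 0 < c) (hy : 1 ≤ y) :
    min 1 (y ^ (-c)) = y ^ (-c) :=
  min_eq_right (Real.rpow_le_one_of_one_le_of_nonpos hy (by linarith))

lemma pow_min {a c : ℝ} (ha : 0 < a) (hc : 0 < c) {y : ℝ} (hy : 0 < y) :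
    (min 1 (y ^ (-a))) ^ c = min 1 (y ^ (-(a*c))) := by
  rcases le_total y 1 with h | h
  · rw [min_one_of_le_one ha hy h, min_one_of_le_one (by positivity) hy h, Real.one_rpow]
  · rw [min_one_of_one_le ha h, min_one_of_one_le (by positivity) h,
      ← Real.rpow_mul hy.le, neg_mul]

lemma meas_min (c : ℝ) : Measurable fun y : ℝ => min 1 (y ^ (-c)) := by
  fun_prop

lemma intOn_Ioc01 {c : ℝ} (hc : 0 < c) :
    IntegrableOn (fun y => min 1 (y ^ (-c))) (Ioc (0:ℝ) 1) := by
  refine (integrableOn_const ?_).congr_fun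
    (fun y hy => (min_one_of_le_one hc hy.1 hy.2).symm) measurableSet_Ioc
  simp [Real.volume_Ioc]

lemma intOn_Ioi1 {c : ℝ} (hc : 1 < c) :
    IntegrableOn (fun y => min 1 (y ^ (-c))) (Ioi (1:ℝ)) :=
  (integrableOn_Ioi_rpow_of_lt (by linarith) one_pos).congr_fun
    (fun y hy => (min_one_of_one_le (by linarith) (le_of_lt hy)).symm) measurableSet_Ioi

lemma inner_le_one {c x : ℝ} (hc : 0 < c) (hx0 : 0 < x) (hx1 : x ≤ 1) :
    ∫ y in Ioo (0:ℝ) x, min 1 (y ^ (-c)) = x := by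
  rw [setIntegral_congr_fun measurableSet_Ioo
    (g := fun _ => (1:ℝ)) (fun y hy => min_one_of_le_one hc hy.1 (le_of_lt (lt_of_lt_of_le hy.2 hx1)))]
  simp [Real.volume_Ioo, hx0.le]

lemma intOn_Ioc1x {c x : ℝ} (hx : 1 ≤ x) :
    IntegrableOn (fun y : ℝ => y ^ (-c)) (Ioc (1:ℝ) x) := by
  have : IntervalIntegrable (fun y : ℝ => y ^ (-c)) volume 1 x :=
    intervalIntegral.intervalIntegrable_rpow (Or.inr (by rw [Set.uIcc_of_le hx]; intro h; exact absurd h.1 (by norm_num)))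
  exact (intervalIntegrable_iff_integrableOn_Ioc_of_le hx).1 this

lemma inner_ge_one {c x : ℝ} (hc : 0 < c) (hc1 : c ≠ 1) (hx : 1 ≤ x) :
    ∫ y in Ioo (0:ℝ) x, min 1 (y ^ (-c)) = 1 + (x ^ (1-c) - 1)/(1-c) := by
  rw [← integral_Ioc_eq_integral_Ioo,
    ← Set.Ioc_union_Ioc_eq_Ioc (zero_le_one) hx,
    setIntegral_union (Set.Ioc_disjoint_Ioc_of_le le_rfl) measurableSet_Ioc (intOn_Ioc01 hc)
      ((intOn_Ioc1x hx).congr_fun (fun y hy => (min_one_of_one_le hc (le_of_lt hy.1)).symm)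
        measurableSet_Ioc)]
  have h1 : ∫ y in Ioc (0:ℝ) 1, min 1 (y ^ (-c)) = 1 := by
    rw [setIntegral_congr_fun measurableSet_Ioc
      (g := fun _ => (1:ℝ)) (fun y hy => min_one_of_le_one hc hy.1 hy.2)]
    simp
  have h2 : ∫ y in Ioc (1:ℝ) x, min 1 (y ^ (-c)) = (x ^ (1-c) - 1)/(1-c) := by
    rw [setIntegral_congr_fun measurableSet_Ioc
      (g := fun y : ℝ => y ^ (-c)) (fun y hy => min_one_of_one_le hc (le_of_lt hy.1)),
      ← intervalIntegral.integral_of_le hx,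
      integral_rpow (Or.inr ⟨by simpa using hc1,
        by rw [Set.uIcc_of_le hx]; intro h; exact absurd h.1 (by norm_num)⟩)]
    rw [Real.one_rpow, show -c + 1 = 1 - c by ring]
  rw [h1, h2]

lemma inner_ge_one_log {x : ℝ} (hx : 1 ≤ x) :
    ∫ y in Ioo (0:ℝ) x, min 1 (y ^ (-(1:ℝ))) = 1 + Real.log x := by
  rw [← integral_Ioc_eq_integral_Ioo,
    ← Set.Ioc_union_Ioc_eq_Ioc (zero_le_one) hx,
    setIntegral_union (Set.Ioc_disjoint_Ioc_of_le le_rfl) measurableSet_Ioc (intOn_Ioc01 one_pos)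
      ((intOn_Ioc1x hx).congr_fun (fun y hy => (min_one_of_one_le one_pos (le_of_lt hy.1)).symm)
        measurableSet_Ioc)]
  have h1 : ∫ y in Ioc (0:ℝ) 1, min 1 (y ^ (-(1:ℝ))) = 1 := by
    rw [setIntegral_congr_fun measurableSet_Ioc
      (g := fun _ => (1:ℝ)) (fun y hy => min_one_of_le_one one_pos hy.1 hy.2)]
    simp
  have h2 : ∫ y in Ioc (1:ℝ) x, min 1 (y ^ (-(1:ℝ))) = Real.log x := by
    rw [setIntegral_congr_fun measurableSet_Ioc
      (g := fun y : ℝ => y⁻¹) (fun y hy => by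
        rw [min_one_of_one_le one_pos (le_of_lt hy.1), Real.rpow_neg_one]),
      ← intervalIntegral.integral_of_le hx,
      integral_inv (by rw [Set.uIcc_of_le hx]; intro h; exact absurd h.1 (by norm_num))]
    rw [div_one]
  rw [h1, h2]

lemma intlog {a : ℝ} (ha : 1 < a) :
    IntegrableOn (fun x : ℝ => x ^ (-a) * Real.log x) (Ioi 1) ∧
    ∫ x in Ioi (1:ℝ), x ^ (-a) * Real.log x = 1/(a-1)^2 := by
  have ha1 : a - 1 ≠ 0 := by linarith
  have hderiv : ∀ x ∈ Ici (1:ℝ), HasDerivAt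
      (fun x : ℝ => -(x ^ (1-a) * ((a-1) * Real.log x + 1))/(a-1)^2)
      (x ^ (-a) * Real.log x) x := by
    intro x hx
    have hx0 : (0:ℝ) < x := lt_of_lt_of_le one_pos hx
    have h1 : HasDerivAt (fun x : ℝ => x ^ (1-a)) ((1-a) * x ^ (-a)) x := by
      have := Real.hasDerivAt_rpow_const (p := 1-a) (Or.inl hx0.ne')
      convert this using 2
      ring_nf
    have h2 : HasDerivAt (fun x : ℝ => (a-1) * Real.log x + 1) ((a-1) * x⁻¹) x :=
      ((Real.hasDerivAt_log hx0.ne').const_mul (a-1)).add_const 1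
    have h3 := ((h1.mul h2).neg).div_const ((a-1)^2)
    refine HasDerivAt.congr_deriv h3 ?_
    have hxi : x ^ (1-a) * x⁻¹ = x ^ (-a) := by
      rw [← Real.rpow_neg_one x, ← Real.rpow_add hx0]
      congr 1
      ring
    have e : x ^ (1-a) * ((a-1) * x⁻¹) = (a-1) * x ^ (-a) := by
      rw [← hxi]; ring
    rw [e]
    field_simp
    ring
  have g'pos : ∀ x ∈ Ioi (1:ℝ), 0 ≤ x ^ (-a) * Real.log x := by
    intro x hx
    have hx1 : (1:ℝ) ≤ x := le_of_lt hx
    exact mul_nonneg (Real.rpow_nonneg (by linarith) _) (Real.log_nonneg hx1)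
  have hlim : Filter.Tendsto (fun x : ℝ => -(x ^ (1-a) * ((a-1) * Real.log x + 1))/(a-1)^2)
      Filter.atTop (nhds 0) := by
    have t1 : Filter.Tendsto (fun x : ℝ => x ^ (1-a) * Real.log x) Filter.atTop (nhds 0) := by
      have hr : (0:ℝ) < (a-1)/2 := by linarith
      have ho := (isLittleO_log_rpow_atTop hr).tendsto_div_nhds_zero
      have t2 : Filter.Tendsto (fun x : ℝ => x ^ ((1-a)/2)) Filter.atTop (nhds 0) := by
        have := tendsto_rpow_neg_atTop hr
        convert this using 2
        ring_nf
      have := ho.mul t2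
      rw [zero_mul] at this
      refine this.congr' ?_
      filter_upwards [Filter.eventually_ge_atTop (1:ℝ)] with x hx
      have hx0 : (0:ℝ) < x := lt_of_lt_of_le one_pos hx
      rw [div_mul_eq_mul_div, div_eq_iff (by positivity : x ^ ((a-1)/2) ≠ 0),
        show x ^ (1-a) * Real.log x * x ^ ((a-1)/2)
          = Real.log x * (x ^ (1-a) * x ^ ((a-1)/2)) by ring,
        ← Real.rpow_add hx0]
      congr 1
      ring
    have t3 : Filter.Tendsto (fun x : ℝ => x ^ (1-a)) Filter.atTop (nhds 0) := by
      have := tendsto_rpow_neg_atTop (show (0:ℝ) < a - 1 by linarith)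
      convert this using 2
      ring_nf
    have := (((t1.const_mul (a-1)).add t3).neg).div_const ((a-1)^2)
    norm_num at this
    refine this.congr fun x => ?_
    ring
  refine ⟨integrableOn_Ioi_deriv_of_nonneg' hderiv g'pos hlim, ?_⟩
  rw [integral_Ioi_of_hasDerivAt_of_nonneg' hderiv g'pos hlim, Real.one_rpow, Real.log_one]
  ring

lemma outer_val {a b : ℝ} (ha : 1 < a) (hb : 0 < b) (hab : 2 < a + b) :
    ∫ x in Ioi (0:ℝ), min 1 (x ^ (-a)) * (∫ y in Ioo (0:ℝ) x, min 1 (y ^ (-b)))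
      = 1/2 + 1/(a-1) + 1/((a-1)*(a+b-2)) := by
  have ha0 : (0:ℝ) < a := by linarith
  have ha1 : a - 1 ≠ 0 := by linarith
  have hab' : a + b - 2 ≠ 0 := by linarith
  have eq1 : ∫ x in Ioc (0:ℝ) 1, min 1 (x ^ (-a)) * (∫ y in Ioo (0:ℝ) x, min 1 (y ^ (-b)))
      = 1/2 := by
    rw [setIntegral_congr_fun measurableSet_Ioc (g := fun x : ℝ => x)
      (fun x hx => by rw [min_one_of_le_one ha0 hx.1 hx.2, inner_le_one hb hx.1 hx.2, one_mul]),
      ← intervalIntegral.integral_of_le zero_le_one, integral_id]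
    norm_num
  have int1 : IntegrableOn
      (fun x : ℝ => min 1 (x ^ (-a)) * (∫ y in Ioo (0:ℝ) x, min 1 (y ^ (-b)))) (Ioc 0 1) := by
    refine ((continuous_id.integrableOn_Ioc (a := (0:ℝ)) (b := 1))).congr_fun
      (fun x hx => by rw [min_one_of_le_one ha0 hx.1 hx.2, inner_le_one hb hx.1 hx.2, one_mul]; rfl)
      measurableSet_Ioc
  by_cases hb1 : b = 1
  · subst hb1
    have eqon : EqOn (fun x : ℝ => min 1 (x ^ (-a)) * (∫ y in Ioo (0:ℝ) x, min 1 (y ^ (-(1:ℝ)))))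
        (fun x : ℝ => x ^ (-a) + x ^ (-a) * Real.log x) (Ioi 1) := by
      intro x hx
      have hx1 : (1:ℝ) ≤ x := le_of_lt hx
      simp only
      rw [min_one_of_one_le ha0 hx1, inner_ge_one_log hx1]
      ring
    have i1 : IntegrableOn (fun x : ℝ => x ^ (-a)) (Ioi (1:ℝ)) :=
      integrableOn_Ioi_rpow_of_lt (by linarith) one_pos
    have i2 := (intlog ha).1
    have eq2 : ∫ x in Ioi (1:ℝ),
        min 1 (x ^ (-a)) * (∫ y in Ioo (0:ℝ) x, min 1 (y ^ (-(1:ℝ))))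
        = 1/(a-1) + 1/(a-1)^2 := by
      rw [setIntegral_congr_fun measurableSet_Ioi eqon, integral_add i1 i2,
        integral_Ioi_rpow_of_lt (by linarith) one_pos, (intlog ha).2, Real.one_rpow,
        show -a + 1 = -(a-1) by ring, neg_div_neg_eq]
    have isum : IntegrableOn (fun x : ℝ => x ^ (-a) + x ^ (-a) * Real.log x) (Ioi (1:ℝ)) :=
      i1.add i2
    rw [← Set.Ioc_union_Ioi_eq_Ioi zero_le_one,
      setIntegral_union (Set.Ioc_disjoint_Ioi le_rfl) measurableSet_Ioi int1
        (isum.congr_fun (fun x hx => (eqon hx).symm) measurableSet_Ioi),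
      eq1, eq2]
    rw [show a + 1 - 2 = a - 1 by ring, show (a-1)*(a-1) = (a-1)^2 by ring]
    ring
  · have hb1' : (1:ℝ) - b ≠ 0 := fun h => hb1 (by linarith)
    have eqon : EqOn (fun x : ℝ => min 1 (x ^ (-a)) * (∫ y in Ioo (0:ℝ) x, min 1 (y ^ (-b))))
        (fun x : ℝ => (1 - 1/(1-b)) * x ^ (-a) + (1/(1-b)) * x ^ (1-b-a)) (Ioi 1) := by
      intro x hx
      have hx1 : (1:ℝ) ≤ x := le_of_lt hx
      have hx0 : (0:ℝ) < x := by linarith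
      simp only
      rw [min_one_of_one_le ha0 hx1, inner_ge_one hb hb1 hx1]
      have hxx : x ^ (1-b-a) = x ^ (-a) * x ^ (1-b) := by
        rw [← Real.rpow_add hx0]; congr 1; ring
      rw [hxx]
      field_simp
      ring
    have i1 : IntegrableOn (fun x : ℝ => (1 - 1/(1-b)) * x ^ (-a)) (Ioi (1:ℝ)) :=
      (integrableOn_Ioi_rpow_of_lt (by linarith) one_pos).const_mul _
    have i2 : IntegrableOn (fun x : ℝ => (1/(1-b)) * x ^ (1-b-a)) (Ioi (1:ℝ)) :=
      (integrableOn_Ioi_rpow_of_lt (by linarith) one_pos).const_mul _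
    have eq2 : ∫ x in Ioi (1:ℝ),
        min 1 (x ^ (-a)) * (∫ y in Ioo (0:ℝ) x, min 1 (y ^ (-b)))
        = (1 - 1/(1-b)) * (1/(a-1)) + (1/(1-b)) * (1/(a+b-2)) := by
      rw [setIntegral_congr_fun measurableSet_Ioi eqon, integral_add i1 i2,
        integral_const_mul, integral_const_mul,
        integral_Ioi_rpow_of_lt (show -a < -1 by linarith) one_pos,
        integral_Ioi_rpow_of_lt (show 1-b-a < -1 by linarith) one_pos, Real.one_rpow]
      rw [show -a + 1 = -(a-1) by ring, show 1-b-a+1 = -(a+b-2) by ring,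
        neg_div_neg_eq, neg_div_neg_eq]
      norm_num
    have isum : IntegrableOn
        (fun x : ℝ => (1 - 1/(1-b)) * x ^ (-a) + (1/(1-b)) * x ^ (1-b-a)) (Ioi (1:ℝ)) :=
      i1.add i2
    rw [← Set.Ioc_union_Ioi_eq_Ioi zero_le_one,
      setIntegral_union (Set.Ioc_disjoint_Ioi le_rfl) measurableSet_Ioi int1
        (isum.congr_fun (fun x hx => (eqon hx).symm) measurableSet_Ioi),
      eq1, eq2]
    field_simp
    ring

lemma mean_val {a : ℝ} (ha : 1 < a) :
    ∫ x in Ioi (0:ℝ), min 1 (x ^ (-a)) = a/(a-1) := by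
  have ha0 : (0:ℝ) < a := by linarith
  have ha1 : a - 1 ≠ 0 := by linarith
  rw [← Set.Ioc_union_Ioi_eq_Ioi zero_le_one,
    setIntegral_union (Set.Ioc_disjoint_Ioi le_rfl) measurableSet_Ioi (intOn_Ioc01 ha0)
      (intOn_Ioi1 ha)]
  have h1 : ∫ x in Ioc (0:ℝ) 1, min 1 (x ^ (-a)) = 1 := by
    rw [setIntegral_congr_fun measurableSet_Ioc
      (g := fun _ => (1:ℝ)) (fun x hx => min_one_of_le_one ha0 hx.1 hx.2)]
    simp
  have h2 : ∫ x in Ioi (1:ℝ), min 1 (x ^ (-a)) = 1/(a-1) := by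
    rw [setIntegral_congr_fun measurableSet_Ioi
      (g := fun x : ℝ => x ^ (-a)) (fun x hx => min_one_of_one_le ha0 (le_of_lt hx)),
      integral_Ioi_rpow_of_lt (by linarith : -a < -1) one_pos, Real.one_rpow,
      show -a + 1 = -(a-1) by ring, neg_div_neg_eq]
  rw [h1, h2]
  field_simp
  ring

theorem stmt_15 (a : ℝ) (ha : 1 < a) (N : ℝ) (hN : 2 ≤ N)
    (ha2 : 2*N/(2*N - 1) < a) :
    (∫ x in Ioi (0:ℝ), min 1 (x ^ (-a))) = a/(a-1) ∧
    2 * (∫ x in Ioi (0:ℝ), ∫ y in Ioo (0:ℝ) x,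
          (min 1 (x ^ (-a))) * (min 1 (y ^ (-a))) ^ (1 - 1/N))
        - (a/(a-1))^2
      = a / (N * (a-1)^2 * (2*(a-1) - a/N)) ∧
    a / (N * (a-1)^2 * (2*(a-1) - a/N))
      = (a/(a-1)) * (a/(a-1) - 1)^2 / (2*N - a/(a-1)) := by
  have ha0 : (0:ℝ) < a := by linarith
  have ha1 : a - 1 ≠ 0 := by linarith
  have hN0 : (0:ℝ) < N := by linarith
  have h2N : (0:ℝ) < 2*N - 1 := by linarith
  rw [div_lt_iff₀ h2N] at ha2
  have hc : 0 < 1 - 1/N := by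
    rw [sub_pos, div_lt_one hN0]; linarith
  have hb : 0 < a * (1 - 1/N) := mul_pos ha0 hc
  have hab : 2 < a + a * (1 - 1/N) := by
    have e : a + a*(1-1/N) - 2 = (a*(2*N-1) - 2*N)/N := by field_simp; ring
    have : 0 < (a*(2*N-1) - 2*N)/N := div_pos (by linarith) hN0
    linarith
  have hD : 0 < 2*(a-1) - a/N := by
    have e : a + a*(1-1/N) - 2 = 2*(a-1) - a/N := by ring
    linarith
  have hsplit : ∀ x : ℝ, (∫ y in Ioo (0:ℝ) x,
      min 1 (x ^ (-a)) * (min 1 (y ^ (-a))) ^ (1 - 1/N))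
      = min 1 (x ^ (-a)) * ∫ y in Ioo (0:ℝ) x, min 1 (y ^ (-(a * (1 - 1/N)))) := by
    intro x
    rw [integral_const_mul]
    congr 1
    refine setIntegral_congr_fun measurableSet_Ioo fun y hy => ?_
    exact pow_min ha0 hc hy.1
  have hP : (0:ℝ) < 2*N*(a-1) - a := by linarith
  have hDN : 2*(a-1) - a/N = (2*N*(a-1)-a)/N := by field_simp
  refine ⟨mean_val ha, ?_, ?_⟩
  · simp only [hsplit]
    rw [outer_val ha hb hab]
    rw [show a + a*(1-1/N) - 2 = (2*N*(a-1)-a)/N by field_simp; ring, hDN]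
    field_simp [show 2*(a-1)*N - a ≠ 0 by linarith]
    ring
  · rw [hDN, show 2*N - a/(a-1) = (2*N*(a-1)-a)/(a-1) by field_simp]
    field_simp
    ring
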